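/- For every positive integer n, the lattice of compact convex subsets of ℝⁿ is join semidistributive: if x, y_1, y_2 are compact convex subsets of ℝⁿ with convexHull(x ∪ y_1) = convexHull(x ∪ y_2), then convexHull(x ∪ y_1) = convexHull(x ∪ (y_1 ∩ y_2)). -/
import Mathlib

open Set

private lemma aux_isCompact_convexJoin {E : Type*} [NormedAddCommGroup E] [NormedSpace ℝ E]
    {s t : Set E} (hs : IsCompact s) (ht : IsCompact t) :
    IsCompact (convexJoin ℝ s t) := by
  have heq : convexJoin ℝ s t =
      (fun p : ℝ × E × E => (1 - p.1) • p.2.1 + p.1 • p.2.2) '' (Icc (0:ℝ) 1 ×ˢ s ×ˢ t) := by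
    ext z
    simp only [mem_convexJoin, segment_eq_image, mem_image, mem_prod, Prod.exists]
    constructor
    · rintro ⟨a, ha, b, hb, θ, hθ, rfl⟩
      exact ⟨θ, a, b, ⟨hθ, ha, hb⟩, rfl⟩
    · rintro ⟨θ, a, b, ⟨hθ, ha, hb⟩, rfl⟩
      exact ⟨a, ha, b, hb, θ, hθ, rfl⟩
  rw [heq]
  exact ((isCompact_Icc.prod (hs.prod ht))).image (by fun_prop)

private lemma aux_isCompact_convexHull_union {E : Type*} [NormedAddCommGroup E]
    [NormedSpace ℝ E] {s t : Set E} (hs : Convex ℝ s) (ht : Convex ℝ t)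
    (hsc : IsCompact s) (htc : IsCompact t) :
    IsCompact (convexHull ℝ (s ∪ t)) := by
  rcases s.eq_empty_or_nonempty with rfl | hs0
  · simpa [ht.convexHull_eq] using htc
  rcases t.eq_empty_or_nonempty with rfl | ht0
  · simpa [hs.convexHull_eq] using hsc
  rw [hs.convexHull_union ht hs0 ht0]
  exact aux_isCompact_convexJoin hsc htc

/-- For every positive integer `n`, the lattice of compact convex subsets of `ℝⁿ` is
join semidistributive. -/
theorem conv_cpct_joinSemidistrib (n : ℕ) (hn : 0 < n)
    (x y₁ y₂ : Set (Fin n → ℝ))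
    (hx : Convex ℝ x) (hy₁ : Convex ℝ y₁) (hy₂ : Convex ℝ y₂)
    (hxc : IsCompact x) (hy₁c : IsCompact y₁) (hy₂c : IsCompact y₂)
    (h : convexHull ℝ (x ∪ y₁) = convexHull ℝ (x ∪ y₂)) :
    convexHull ℝ (x ∪ y₁) = convexHull ℝ (x ∪ (y₁ ∩ y₂)) := by
  have hCc : IsCompact (convexHull ℝ (x ∪ y₁)) :=
    aux_isCompact_convexHull_union hx hy₁ hxc hy₁c
  have hCconv : Convex ℝ (convexHull ℝ (x ∪ y₁)) := convex_convexHull ℝ _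
  have hE1 : (convexHull ℝ (x ∪ y₁)).extremePoints ℝ ⊆ x ∪ y₁ :=
    extremePoints_convexHull_subset
  have hE2 : (convexHull ℝ (x ∪ y₁)).extremePoints ℝ ⊆ x ∪ y₂ := by
    rw [h]; exact extremePoints_convexHull_subset
  have hE : (convexHull ℝ (x ∪ y₁)).extremePoints ℝ ⊆ x ∪ (y₁ ∩ y₂) := by
    intro p hp
    rcases hE1 hp with hpx | hp1
    · exact Or.inl hpx
    · rcases hE2 hp with hpx | hp2
      · exact Or.inl hpx
      · exact Or.inr ⟨hp1, hp2⟩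
  have hDc : IsCompact (convexHull ℝ (x ∪ (y₁ ∩ y₂))) :=
    aux_isCompact_convexHull_union hx (hy₁.inter hy₂)
      hxc (hy₁c.inter_right hy₂c.isClosed)
  apply Set.Subset.antisymm
  · calc convexHull ℝ (x ∪ y₁)
        = closure (convexHull ℝ ((convexHull ℝ (x ∪ y₁)).extremePoints ℝ)) :=
          (closure_convexHull_extremePoints hCc hCconv).symm
      _ ⊆ closure (convexHull ℝ (x ∪ (y₁ ∩ y₂))) := closure_mono (convexHull_mono hE)
      _ = convexHull ℝ (x ∪ (y₁ ∩ y₂)) := hDc.isClosed.closure_eq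
  · exact convexHull_mono (Set.union_subset_union_right x Set.inter_subset_left)
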